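/- Let Σ be a signature matrix, A ∈ ℝ^{m×n}, and suppose AᵀΣA = P L D Lᵀ Pᵀ where P is a permutation, L unit lower triangular, and D symmetric invertible with eigendecomposition D = VΛVᵀ (V orthogonal, Λ diagonal invertible). Set Σ_n := sign(Λ), R := |Λ|^{1/2} Vᵀ Lᵀ Pᵀ, and H := AR⁻¹. Then Hᵀ Σ H = Σ_n and A = HR. -/

import Mathlib

open Matrix

theorem bk_to_indefinite_qr {m n : ℕ} (Sig : Matrix (Fin m) (Fin m) ℝ)
    (A : Matrix (Fin m) (Fin n) ℝ)
    (P L D V Lam : Matrix (Fin n) (Fin n) ℝ) (σ : Equiv.Perm (Fin n))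
    (hSig : Sig.IsDiag ∧ ∀ i, Sig i i = 1 ∨ Sig i i = -1)
    (hP : P = σ.permMatrix ℝ)
    (hLlow : ∀ i j, i < j → L i j = 0) (hLunit : ∀ i, L i i = 1)
    (hDsym : Dᵀ = D) (hDeig : D = V * Lam * Vᵀ) (hV : Vᵀ * V = 1)
    (hLam : Lam.IsDiag) (hLam0 : ∀ i, Lam i i ≠ 0)
    (hfac : Aᵀ * Sig * A = P * L * D * Lᵀ * Pᵀ) :
    let Sn : Matrix (Fin n) (Fin n) ℝ :=
      Matrix.diagonal (fun i => Real.sign (Lam i i))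
    let R : Matrix (Fin n) (Fin n) ℝ :=
      Matrix.diagonal (fun i => Real.sqrt |Lam i i|) * Vᵀ * Lᵀ * Pᵀ
    let H : Matrix (Fin m) (Fin n) ℝ := A * R⁻¹
    Hᵀ * Sig * H = Sn ∧ A = H * R := by
  intro Sn R H
  set S : Matrix (Fin n) (Fin n) ℝ := Matrix.diagonal (fun i => Real.sqrt |Lam i i|) with hS
  -- determinants
  have hSdet : IsUnit S.det := by
    rw [hS, Matrix.det_diagonal]
    refine isUnit_iff_ne_zero.mpr (Finset.prod_ne_zero_iff.mpr fun i _ => ?_)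
    exact Real.sqrt_ne_zero'.mpr (abs_pos.mpr (hLam0 i))
  have hVdet : IsUnit (Vᵀ).det := by
    have := congrArg Matrix.det hV
    rw [Matrix.det_mul, Matrix.det_one] at this
    exact IsUnit.of_mul_eq_one _ this
  have hLdet : L.det = 1 := by
    rw [Matrix.det_of_lowerTriangular L
      (fun i j h => hLlow i j (OrderDual.toDual_lt_toDual.mp h))]
    simp [hLunit]
  have hPdet : IsUnit (Pᵀ).det := by
    rw [Matrix.det_transpose, hP, Matrix.det_permutation]
    rcases Int.units_eq_one_or (Equiv.Perm.sign σ) with h | h <;> simp [h]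
  have hRdet : IsUnit R.det := by
    show IsUnit (S * Vᵀ * Lᵀ * Pᵀ).det
    have hLTdet : IsUnit (Lᵀ).det := by
      rw [Matrix.det_transpose, hLdet]; exact isUnit_one
    rw [Matrix.det_mul, Matrix.det_mul, Matrix.det_mul]
    exact ((hSdet.mul hVdet).mul hLTdet).mul hPdet
  -- key identity
  have hSSnS : S * Sn * S = Lam := by
    rw [hS]
    show Matrix.diagonal _ * Matrix.diagonal _ * Matrix.diagonal _ = Lam
    rw [Matrix.diagonal_mul_diagonal, Matrix.diagonal_mul_diagonal]
    have hfun : (fun i => Real.sqrt |Lam i i| * Real.sign (Lam i i) * Real.sqrt |Lam i i|)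
        = Lam.diag := by
      funext i
      show _ = Lam i i
      have h1 : Real.sqrt |Lam i i| * Real.sqrt |Lam i i| = |Lam i i| :=
        Real.mul_self_sqrt (abs_nonneg _)
      rw [mul_comm (Real.sqrt _) (Real.sign _), mul_assoc, h1]
      rcases (hLam0 i).lt_or_gt with h | h
      · rw [Real.sign_of_neg h, abs_of_neg h]; ring
      · rw [Real.sign_of_pos h, abs_of_pos h]; ring
    rw [hfun, hLam.diagonal_diag]
  have hRT : Rᵀ = P * L * V * S := by
    show (S * Vᵀ * Lᵀ * Pᵀ)ᵀ = _
    simp [Matrix.transpose_mul, Matrix.mul_assoc, hS, Matrix.diagonal_transpose]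
  have key : Rᵀ * Sn * R = P * L * D * Lᵀ * Pᵀ := by
    rw [hRT]
    show P * L * V * S * Sn * (S * Vᵀ * Lᵀ * Pᵀ) = _
    rw [hDeig]
    rw [show P * L * V * S * Sn * (S * Vᵀ * Lᵀ * Pᵀ)
        = P * L * (V * (S * Sn * S) * Vᵀ) * Lᵀ * Pᵀ by
      simp only [Matrix.mul_assoc]]
    rw [hSSnS]
  have hinv : R⁻¹ * R = 1 := Matrix.nonsing_inv_mul R hRdet
  have hinv' : R * R⁻¹ = 1 := Matrix.mul_nonsing_inv R hRdet
  have hTinv : (Rᵀ)⁻¹ * Rᵀ = 1 := Matrix.nonsing_inv_mul _ (by rwa [Matrix.det_transpose])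
  constructor
  · show (A * R⁻¹)ᵀ * Sig * (A * R⁻¹) = Sn
    rw [Matrix.transpose_mul, Matrix.transpose_nonsing_inv]
    calc (Rᵀ)⁻¹ * Aᵀ * Sig * (A * R⁻¹)
        = (Rᵀ)⁻¹ * (Aᵀ * Sig * A) * R⁻¹ := by simp only [Matrix.mul_assoc]
      _ = (Rᵀ)⁻¹ * (Rᵀ * Sn * R) * R⁻¹ := by rw [hfac, key]
      _ = ((Rᵀ)⁻¹ * Rᵀ) * Sn * (R * R⁻¹) := by simp only [Matrix.mul_assoc]
      _ = Sn := by rw [hTinv, hinv', Matrix.one_mul, Matrix.mul_one]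
  · show A = A * R⁻¹ * R
    rw [Matrix.mul_assoc, hinv, Matrix.mul_one]
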